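/- Let S and T be multisets of rational numbers such that for every μ ∈ ℚ, card(T^{≥μ}) ≤ card(S^{≥μ}). Then there exist multisets U, S', T' of rationals with S = U + S' and T = U + T' such that: (a) for every μ ∈ ℚ, card(T'^{≥μ}) ≤ card(S'^{≥μ}); (b) if T' is nonempty then S' is nonempty and the maximum element of S' is strictly greater than the maximum element of T'; (c) if U and T' are both nonempty then every element of S' is less than or equal to every element of U. -/
import Mathlib

private lemma mcf_max_exists (T : Multiset ℚ) (hT : T ≠ 0) :
    ∃ a ∈ T, ∀ b ∈ T, b ≤ a := by
  induction T using Multiset.induction with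
  | empty => exact absurd rfl hT
  | cons x s ih =>
    by_cases hs : s = 0
    · subst hs
      exact ⟨x, Multiset.mem_cons_self x 0, by simp⟩
    · obtain ⟨a, haT, hmax⟩ := ih hs
      rcases le_total x a with hxa | hax
      · exact ⟨a, Multiset.mem_cons_of_mem haT, by
          intro b hb
          rcases Multiset.mem_cons.mp hb with rfl | hb
          · exact hxa
          · exact hmax b hb⟩
      · exact ⟨x, Multiset.mem_cons_self x s, by
          intro b hb
          rcases Multiset.mem_cons.mp hb with rfl | hb
          · exact le_rfl
          · exact le_trans (hmax b hb) hax⟩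

private lemma mcf_card_filter_erase {a : ℚ} {T : Multiset ℚ} (ha : a ∈ T)
    (p : ℚ → Prop) [DecidablePred p] :
    ((T.erase a).filter p).card = (T.filter p).card - (if p a then 1 else 0) := by
  conv_rhs => rw [← Multiset.cons_erase ha]
  by_cases hp : p a
  · rw [Multiset.filter_cons_of_pos _ hp, Multiset.card_cons, if_pos hp]
    omega
  · rw [Multiset.filter_cons_of_neg _ hp, if_neg hp]
    omega

private lemma mcf_aux : ∀ n (S T : Multiset ℚ), T.card ≤ n →
    (∀ μ : ℚ, (T.filter fun t => μ ≤ t).card ≤ (S.filter fun s => μ ≤ s).card) →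
    ∃ U S' T' : Multiset ℚ,
      S = U + S' ∧ T = U + T' ∧
      (∀ μ : ℚ, (T'.filter fun t => μ ≤ t).card ≤ (S'.filter fun s => μ ≤ s).card) ∧
      (T' ≠ 0 → S' ≠ 0 ∧ ∃ m ∈ S', ∀ t ∈ T', t < m) ∧
      (U ≠ 0 → T' ≠ 0 → ∀ s ∈ S', ∀ u ∈ U, s ≤ u) := by
  intro n
  induction n with
  | zero =>
    intro S T hcard h
    have hT : T = 0 := Multiset.card_eq_zero.mp (Nat.le_zero.mp hcard)
    exact ⟨0, S, 0, by simp, by simp [hT], by simp, by simp, by simp⟩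
  | succ n ih =>
    intro S T hcard h
    by_cases hT : T = 0
    · exact ⟨0, S, 0, by simp, by simp [hT], by simp, by simp, by simp⟩
    obtain ⟨tm, htmT, htmax⟩ := mcf_max_exists T hT
    -- there is some s in S with tm ≤ s
    have h1 : 0 < ((S.filter fun s => tm ≤ s).card) := by
      refine lt_of_lt_of_le ?_ (h tm)
      rw [Multiset.card_pos]
      intro h0
      have : tm ∈ (T.filter fun t => tm ≤ t) := Multiset.mem_filter.mpr ⟨htmT, le_rfl⟩
      simp [h0] at this
    obtain ⟨s0, hs0⟩ := Multiset.card_pos_iff_exists_mem.mp h1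
    obtain ⟨hs0S, hts0⟩ := Multiset.mem_filter.mp hs0
    have hSne : S ≠ 0 := fun h0 => by simp [h0] at hs0S
    obtain ⟨sm, hsmS, hsmax⟩ := mcf_max_exists S hSne
    have htm_le_sm : tm ≤ sm := le_trans hts0 (hsmax s0 hs0S)
    rcases lt_or_eq_of_le htm_le_sm with hlt | heq
    · -- max of S strictly bigger: take U = 0
      refine ⟨0, S, T, by simp, by simp, h, fun _ => ⟨hSne, sm, hsmS, ?_⟩, by simp⟩
      exact fun t ht => lt_of_le_of_lt (htmax t ht) hlt
    · -- tm = sm, remove tm from both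
      have htmS : tm ∈ S := heq ▸ hsmS
      have hdom : ∀ μ : ℚ, ((T.erase tm).filter fun t => μ ≤ t).card ≤
          ((S.erase tm).filter fun s => μ ≤ s).card := by
        intro μ
        rw [mcf_card_filter_erase htmT, mcf_card_filter_erase htmS]
        exact Nat.sub_le_sub_right (h μ) _
      have hcard' : (T.erase tm).card ≤ n := by
        rw [Multiset.card_erase_of_mem htmT, Nat.pred_eq_sub_one]
        have h1T : 0 < T.card := Multiset.card_pos.mpr hT
        omega
      obtain ⟨U₀, S', T', hS0, hT0, hdom', hb, hc⟩ := ih (S.erase tm) (T.erase tm) hcard' hdom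
      refine ⟨tm ::ₘ U₀, S', T', ?_, ?_, hdom', hb, ?_⟩
      · rw [Multiset.cons_add, ← hS0, Multiset.cons_erase htmS]
      · rw [Multiset.cons_add, ← hT0, Multiset.cons_erase htmT]
      · intro _ hT' s hs u hu
        have hsS : s ∈ S := Multiset.mem_of_mem_erase (hS0 ▸ Multiset.mem_add.mpr (Or.inr hs))
        rcases Multiset.mem_cons.mp hu with rfl | hu
        · exact heq ▸ hsmax s hsS
        · exact hc (fun h0 => by simp [h0] at hu) hT' s hs u hu

/-- existence of the maximal common factor decomposition. If `S`
slopewise dominates `T` (i.e. `card(T^{≥μ}) ≤ card(S^{≥μ})` for all `μ`), then there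
are decompositions `S = U + S'`, `T = U + T'` such that `S'` slopewise dominates `T'`,
`max S' > max T'` when `T' ≠ 0`, and every element of `S'` is at most every element
of `U` when `U, T' ≠ 0`. -/
theorem maximal_common_factor_decomposition
    (S T : Multiset ℚ)
    (h : ∀ μ : ℚ, (T.filter fun t => μ ≤ t).card ≤ (S.filter fun s => μ ≤ s).card) :
    ∃ U S' T' : Multiset ℚ,
      S = U + S' ∧ T = U + T' ∧
      (∀ μ : ℚ, (T'.filter fun t => μ ≤ t).card ≤ (S'.filter fun s => μ ≤ s).card) ∧
      (T' ≠ 0 → S' ≠ 0 ∧ ∃ m ∈ S', ∀ t ∈ T', t < m) ∧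
      (U ≠ 0 → T' ≠ 0 → ∀ s ∈ S', ∀ u ∈ U, s ≤ u) := by
  exact mcf_aux T.card S T le_rfl h
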